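/- Let G = (V,E) be a finite directed acyclic graph, let s, v, w ∈ V, suppose there is a directed path from s to v, and suppose there are two distinct simple paths from v to w in G. Then there are two distinct simple paths from s to w in G. -/

import Mathlib

/-- A simple (directed) path from `v` to `w` in the directed graph with edge relation `E`:
a nonempty list of pairwise distinct vertices starting at `v`, ending at `w`,
with consecutive vertices joined by edges. -/
def IsSimplePath {V : Type*} (E : V → V → Prop) (v w : V) (p : List V) : Prop :=
  p.Chain' E ∧ p.head? = some v ∧ p.getLast? = some w ∧ p.Nodup

/-- A directed graph is singly-connected if for every pair of vertices there is
at most one simple path between them. -/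
def SinglyConnected {V : Type*} (E : V → V → Prop) : Prop :=
  ∀ v w : V, ∀ p q : List V, IsSimplePath E v w p → IsSimplePath E v w q → p = q

/-- A directed graph is acyclic if it has no directed cycle. -/
def DAcyclic {V : Type*} (E : V → V → Prop) : Prop :=
  ∀ v : V, ¬ Relation.TransGen E v v

lemma chain'_mem_rtg {V : Type*} {E : V → V → Prop} :
    ∀ {q : List V}, q.Chain' E → ∀ {a x : V}, q.head? = some a → x ∈ q →
      Relation.ReflTransGen E a x := by
  intro q
  induction q with
  | nil => intro _ a x h; simp at h
  | cons b t ih =>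
    intro hc a x hh hx
    simp at hh; subst hh
    rcases List.mem_cons.1 hx with rfl | hx
    · exact Relation.ReflTransGen.refl
    · rcases t with _ | ⟨c, t'⟩
      · simp at hx
      · rw [List.Chain', List.isChain_cons_cons] at hc
        exact Relation.ReflTransGen.head hc.1 (ih hc.2 rfl hx)

lemma simple_prepend {V : Type*} {E : V → V → Prop} {a b w : V} {q : List V}
    (h : IsSimplePath E b w q) (hab : E a b) (ha : a ∉ q) :
    IsSimplePath E a w (a :: q) := by
  obtain ⟨hc, hh, hl, hn⟩ := h
  have hq : q ≠ [] := by intro h'; subst h'; simp at hh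
  refine ⟨?_, by simp, ?_, by simp [hn, ha]⟩
  · rw [List.Chain', List.isChain_cons]
    exact ⟨fun c hc' => by rw [hh] at hc'; simp at hc'; subst hc'; exact hab, hc⟩
  · rw [List.getLast?_cons, hl]; rfl

theorem two_paths_from_ancestor {V : Type*} [Finite V] (E : V → V → Prop)
    (hacyc : DAcyclic E) (s v w : V) (hsv : Relation.ReflTransGen E s v)
    (p₁ p₂ : List V) (hne : p₁ ≠ p₂)
    (h₁ : IsSimplePath E v w p₁) (h₂ : IsSimplePath E v w p₂) :
    ∃ q₁ q₂ : List V, q₁ ≠ q₂ ∧ IsSimplePath E s w q₁ ∧ IsSimplePath E s w q₂ := by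
  induction hsv using Relation.ReflTransGen.head_induction_on with
  | refl => exact ⟨p₁, p₂, hne, h₁, h₂⟩
  | head hab hbv ih =>
    rename_i a b
    obtain ⟨q₁, q₂, hq, hq₁, hq₂⟩ := ih
    have key : ∀ q : List V, IsSimplePath E b w q → a ∉ q := by
      intro q hsp ha
      exact hacyc a (Relation.TransGen.head' hab (chain'_mem_rtg hsp.1 hsp.2.1 ha))
    refine ⟨a :: q₁, a :: q₂, by simp [hq], simple_prepend hq₁ hab (key _ hq₁),
      simple_prepend hq₂ hab (key _ hq₂)⟩
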